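/- Let F₁, F₂, F₃, F₄ be the Tanner sheaves on X associated with four families of local codes {C_{1,σ}}, {C_{2,σ}}, {C_{3,σ}}, {C_{4,σ}} (σ ∈ X(t−1)), and let ℓ₁ + ℓ₂ + ℓ₃ + ℓ₄ = t. Assume that for every σ ∈ X(t−1) and all cᵢ ∈ C_{i,σ} (i = 1,2,3,4): Σ_{τ ∈ X_{≥σ}(t)} c₁(τ)·c₂(τ)·c₃(τ)·c₄(τ) = 0. Fix a cocycle ζ₄ ∈ ker δ^{ℓ₄}(X,F₄) and define f_{ζ₄}(α₁,α₂,α₃) = Σ_{τ ∈ X(t)} (((α₁∪α₂)∪α₃)∪ζ₄)(τ)(τ). Then for all cocycles ζᵢ ∈ ker δ^{ℓᵢ}(X,Fᵢ) and all coboundaries bᵢ ∈ im δ^{ℓᵢ−1}(X,Fᵢ) (i = 1,2,3): f_{ζ₄}(ζ₁+b₁, ζ₂+b₂, ζ₃+b₃) = f_{ζ₄}(ζ₁, ζ₂, ζ₃). -/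

import Mathlib

set_option linter.unusedSectionVars false

namespace SheafCup

variable {V : Type*} [Fintype V] [LinearOrder V]
variable {K : Type*} [Field K]

/-- `X_{≥σ}(t)`: the `t`-simplices (i.e. those with `t+1` vertices) of `X` containing `σ`. -/
abbrev Up (X : Set (Finset V)) [DecidablePred (· ∈ X)] (σ : Finset V) (t : ℕ) : Type _ :=
  {τ : Finset V // τ ∈ X ∧ σ ⊆ τ ∧ τ.card = t + 1}

/-- The first `i+1` vertices of `σ` in increasing order. -/
def frontFace (i : ℕ) (σ : Finset V) : Finset V :=
  ((σ.sort (· ≤ ·)).take (i + 1)).toFinset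

/-- The vertices of `σ` from position `i` on, in increasing order. -/
def backFace (i : ℕ) (σ : Finset V) : Finset V :=
  ((σ.sort (· ≤ ·)).drop i).toFinset

lemma frontFace_subset (i : ℕ) (σ : Finset V) : frontFace i σ ⊆ σ := by
  intro x hx
  have hx' : x ∈ (σ.sort (· ≤ ·)).take (i + 1) := List.mem_toFinset.mp hx
  have := (List.take_sublist (i + 1) (σ.sort (· ≤ ·))).subset hx'
  simpa [Finset.mem_sort] using this

lemma backFace_subset (i : ℕ) (σ : Finset V) : backFace i σ ⊆ σ := by
  intro x hx
  have hx' : x ∈ (σ.sort (· ≤ ·)).drop i := List.mem_toFinset.mp hx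
  have := (List.drop_sublist i (σ.sort (· ≤ ·))).subset hx'
  simpa [Finset.mem_sort] using this

/-- The cup product of an `i`-cochain `α` with a cochain `β`:
`(α∪β)(σ)(τ) = α(front_i σ)(τ) · β(back_i σ)(τ)`. -/
def cup (X : Set (Finset V)) [DecidablePred (· ∈ X)] (t i : ℕ)
    (α β : (σ : Finset V) → Up X σ t → K) : (σ : Finset V) → Up X σ t → K :=
  fun σ τ =>
    α (frontFace i σ) ⟨τ.1, τ.2.1, (frontFace_subset i σ).trans τ.2.2.1, τ.2.2.2⟩ *
    β (backFace i σ) ⟨τ.1, τ.2.1, (backFace_subset i σ).trans τ.2.2.1, τ.2.2.2⟩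

/-- The coboundary `(δα)(ρ)(τ) = Σ_{σ ∈ X, σ ⊂ ρ, |σ| = |ρ|−1} α(σ)(τ)`. -/
def cobdry (X : Set (Finset V)) [DecidablePred (· ∈ X)] (t : ℕ)
    (α : (σ : Finset V) → Up X σ t → K) : (σ : Finset V) → Up X σ t → K :=
  fun ρ τ => ∑ σ : Finset V,
    if h : σ ∈ X ∧ σ ⊆ ρ ∧ σ.card + 1 = ρ.card
    then α σ ⟨τ.1, τ.2.1, h.2.1.trans τ.2.2.1, τ.2.2.2⟩ else 0

/-- `c` is a section of the Tanner sheaf (with local codes `Cc`) over the cell `σ`: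
its restriction above every `(t−1)`-cell `σ' ⊇ σ` lies in the local code `Cc σ'`. -/
def IsSection (X : Set (Finset V)) [DecidablePred (· ∈ X)] (t : ℕ)
    (Cc : (σ' : Finset V) → Set (Up X σ' t → K)) (σ : Finset V)
    (c : Up X σ t → K) : Prop :=
  ∀ (σ' : Finset V), σ' ∈ X → σ'.card = t → ∀ (h3 : σ ⊆ σ'),
    (fun τ : Up X σ' t => c ⟨τ.1, τ.2.1, h3.trans τ.2.2.1, τ.2.2.2⟩) ∈ Cc σ'

/-- `α` is an `i`-cochain of the Tanner sheaf: `α(σ)` is a section over each `i`-simplex. -/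
def IsCochain (X : Set (Finset V)) [DecidablePred (· ∈ X)] (t : ℕ)
    (Cc : (σ' : Finset V) → Set (Up X σ' t → K)) (i : ℕ)
    (α : (σ : Finset V) → Up X σ t → K) : Prop :=
  ∀ σ : Finset V, σ ∈ X → σ.card = i + 1 → IsSection X t Cc σ (α σ)

end SheafCup


namespace SheafCup
open List
section ListFace
variable {V : Type*} [Fintype V] [LinearOrder V]

theorem take_eraseIdx_lo (L : List V) (k i : ℕ) (hk : k ≤ i+1) (hkl : k < L.length) :
    (L.eraseIdx k).take (i+1) = (L.take (i+2)).eraseIdx k := by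
  rw [eraseIdx_eq_take_drop_succ, eraseIdx_eq_take_drop_succ,
      take_append, take_take, take_take, drop_take]
  simp only [length_take, Nat.min_eq_left hkl.le]
  have h2 : min (i+1) k = k := by omega
  have h3 : min k (i+2) = k := by omega
  rw [h2, h3]
  congr 2
  omega

theorem drop_eraseIdx_lo (L : List V) (k i : ℕ) (hk : k ≤ i) (hkl : k < L.length) :
    (L.eraseIdx k).drop i = L.drop (i+1) := by
  rw [eraseIdx_eq_take_drop_succ, drop_append, drop_drop]
  simp only [length_take, Nat.min_eq_left hkl.le]
  rw [drop_eq_nil_of_le (by simp only [length_take, Nat.min_eq_left hkl.le]; omega), nil_append]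
  congr 1
  omega

theorem drop_eraseIdx_hi (L : List V) (k i : ℕ) (hk : i ≤ k) (hkl : k < L.length) :
    (L.eraseIdx k).drop i = (L.drop i).eraseIdx (k-i) := by
  rw [eraseIdx_eq_take_drop_succ, eraseIdx_eq_take_drop_succ,
      drop_append, drop_take, drop_drop, drop_drop]
  simp only [length_take, Nat.min_eq_left hkl.le]
  congr 2
  omega

theorem take_eraseIdx_hi (L : List V) (k i : ℕ) (hk : i+1 ≤ k) (hkl : k < L.length) :
    (L.eraseIdx k).take (i+1) = L.take (i+1) := by
  rw [eraseIdx_eq_take_drop_succ, take_append, take_take]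
  simp only [length_take, Nat.min_eq_left hkl.le]
  have h2 : min (i+1) k = i+1 := by omega
  have h3 : i+1-k = 0 := by omega
  rw [h2, h3, take_zero, append_nil]

theorem toFinset_erase' {l : List V} (h : l.Nodup) (a : V) :
    (l.erase a).toFinset = l.toFinset.erase a := by
  ext x
  simp [h.mem_erase_iff, Finset.mem_erase, List.mem_toFinset, and_comm]

theorem sort_erase (ρ : Finset V) (v : V) :
    (ρ.erase v).sort (· ≤ ·) = (ρ.sort (· ≤ ·)).erase v := by
  refine List.Perm.eq_of_pairwise' (Finset.pairwise_sort _ _)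
    ((Finset.pairwise_sort ρ (· ≤ ·)).sublist List.erase_sublist) ?_
  rw [← Multiset.coe_eq_coe, ← Multiset.coe_erase]
  rw [Finset.sort_eq, Finset.sort_eq, Finset.erase_val]

theorem length_sort' (ρ : Finset V) : (ρ.sort (· ≤ ·)).length = ρ.card :=
  Finset.length_sort _

theorem nodup_sort' (ρ : Finset V) : (ρ.sort (· ≤ ·)).Nodup :=
  Finset.sort_nodup _ _

theorem exists_idx_frontFace {i : ℕ} {ρ : Finset V} {v : V} (h : v ∈ frontFace i ρ) :
    ∃ k, ∃ hk : k < (ρ.sort (· ≤ ·)).length, k ≤ i ∧ (ρ.sort (· ≤ ·))[k] = v := by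
  have h' : v ∈ (ρ.sort (· ≤ ·)).take (i+1) := List.mem_toFinset.mp h
  obtain ⟨k, hk, hv⟩ := List.mem_iff_getElem.mp h'
  rw [length_take] at hk
  refine ⟨k, by omega, by omega, ?_⟩
  rw [← List.getElem_take (xs := ρ.sort (· ≤ ·)) (j := i+1) (h := by rw [length_take]; omega)]
  exact hv

theorem exists_idx_backFace {i : ℕ} {ρ : Finset V} {v : V} (h : v ∈ backFace i ρ) :
    ∃ k, ∃ hk : k < (ρ.sort (· ≤ ·)).length, i ≤ k ∧ (ρ.sort (· ≤ ·))[k] = v := by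
  have h' : v ∈ (ρ.sort (· ≤ ·)).drop i := List.mem_toFinset.mp h
  obtain ⟨k, hk, hv⟩ := List.mem_iff_getElem.mp h'
  rw [length_drop] at hk
  refine ⟨i + k, by omega, by omega, ?_⟩
  rw [← List.getElem_drop (xs := ρ.sort (· ≤ ·)) (i := i) (j := k) (h := by rw [length_drop]; omega)]
  exact hv

theorem frontFace_erase_lo {i : ℕ} {ρ : Finset V} {v : V} (h : v ∈ frontFace (i+1) ρ) :
    frontFace i (ρ.erase v) = (frontFace (i+1) ρ).erase v := by
  obtain ⟨k, hk, hki, rfl⟩ := exists_idx_frontFace h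
  have hnd := nodup_sort' ρ
  unfold frontFace
  rw [sort_erase]
  have h1 : ((ρ.sort (· ≤ ·)).take (i+2)).Nodup := hnd.sublist (take_sublist _ _)
  have h2 : k < ((ρ.sort (· ≤ ·)).take (i+2)).length := by rw [length_take]; omega
  rw [← toFinset_erase' h1]
  congr 1
  rw [hnd.erase_getElem k hk, take_eraseIdx_lo _ k i hki hk, ← h1.erase_getElem k h2,
      List.getElem_take]

theorem backFace_erase_lo {i : ℕ} {ρ : Finset V} {v : V} (h : v ∈ frontFace i ρ) :
    backFace i (ρ.erase v) = backFace (i+1) ρ := by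
  obtain ⟨k, hk, hki, rfl⟩ := exists_idx_frontFace h
  unfold backFace
  rw [sort_erase, (nodup_sort' ρ).erase_getElem k hk, drop_eraseIdx_lo _ k i hki hk]

theorem frontFace_erase_hi {i : ℕ} {ρ : Finset V} {v : V} (h : v ∈ backFace (i+1) ρ) :
    frontFace i (ρ.erase v) = frontFace i ρ := by
  obtain ⟨k, hk, hki, rfl⟩ := exists_idx_backFace h
  unfold frontFace
  rw [sort_erase, (nodup_sort' ρ).erase_getElem k hk, take_eraseIdx_hi _ k i hki hk]

theorem backFace_erase_hi {i : ℕ} {ρ : Finset V} {v : V} (h : v ∈ backFace (i+1) ρ) :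
    backFace i (ρ.erase v) = (backFace i ρ).erase v := by
  obtain ⟨k, hk, hki, rfl⟩ := exists_idx_backFace h
  have hnd := nodup_sort' ρ
  unfold backFace
  rw [sort_erase]
  have h1 : ((ρ.sort (· ≤ ·)).drop i).Nodup := hnd.sublist (drop_sublist _ _)
  have h2 : k - i < ((ρ.sort (· ≤ ·)).drop i).length := by rw [length_drop]; omega
  rw [← toFinset_erase' h1]
  congr 1
  rw [hnd.erase_getElem k hk, drop_eraseIdx_hi _ k i (by omega) hk,
      ← h1.erase_getElem (k-i) h2, List.getElem_drop]
  have h3 : i + (k - i) = k := by omega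
  simp only [h3]

theorem frontFace_erase_top {i : ℕ} {ρ : Finset V} (h : i + 2 ≤ ρ.card) :
    (frontFace (i+1) ρ).erase ((ρ.sort (· ≤ ·))[i+1]'(by rw [length_sort']; omega)) =
      frontFace i ρ := by
  have hnd := nodup_sort' ρ
  have hlen : i + 1 < (ρ.sort (· ≤ ·)).length := by rw [length_sort']; omega
  have h1 : ((ρ.sort (· ≤ ·)).take (i+2)).Nodup := hnd.sublist (take_sublist _ _)
  have h2 : i + 1 < ((ρ.sort (· ≤ ·)).take (i+2)).length := by rw [length_take]; omega
  unfold frontFace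
  rw [← toFinset_erase' h1]
  congr 1
  rw [show (ρ.sort (· ≤ ·))[i+1] = ((ρ.sort (· ≤ ·)).take (i+2))[i+1]'h2 from
        (List.getElem_take).symm,
      h1.erase_getElem (i+1) h2, eraseIdx_eq_take_drop_succ, take_take,
      drop_eq_nil_of_le (by rw [length_take]; omega), append_nil]
  congr 1
  omega

theorem backFace_erase_bot {i : ℕ} {ρ : Finset V} (h : i + 1 ≤ ρ.card) :
    (backFace i ρ).erase ((ρ.sort (· ≤ ·))[i]'(by rw [length_sort']; omega)) =
      backFace (i+1) ρ := by
  have hnd := nodup_sort' ρ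
  have hlen : i < (ρ.sort (· ≤ ·)).length := by rw [length_sort']; omega
  have h1 : ((ρ.sort (· ≤ ·)).drop i).Nodup := hnd.sublist (drop_sublist _ _)
  have h2 : 0 < ((ρ.sort (· ≤ ·)).drop i).length := by rw [length_drop]; omega
  unfold backFace
  rw [← toFinset_erase' h1]
  congr 1
  rw [show (ρ.sort (· ≤ ·))[i] = ((ρ.sort (· ≤ ·)).drop i)[0]'h2 from by
        rw [List.getElem_drop]; congr 1,
      h1.erase_getElem 0 h2, eraseIdx_eq_take_drop_succ, take_zero, nil_append,
      drop_drop]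

theorem frontFace_succ_insert {i : ℕ} {ρ : Finset V} (h : i + 2 ≤ ρ.card) :
    frontFace (i+1) ρ =
      insert ((ρ.sort (· ≤ ·))[i+1]'(by rw [length_sort']; omega)) (frontFace i ρ) := by
  have hlen : i + 1 < (ρ.sort (· ≤ ·)).length := by rw [length_sort']; omega
  unfold frontFace
  have hsp := (List.take_concat_get hlen).symm
  rw [concat_eq_append] at hsp
  rw [hsp, toFinset_append]
  simp [Finset.insert_eq, Finset.union_comm, -Finset.union_singleton]

theorem backFace_insert {i : ℕ} {ρ : Finset V} (h : i + 1 ≤ ρ.card) :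
    backFace i ρ =
      insert ((ρ.sort (· ≤ ·))[i]'(by rw [length_sort']; omega)) (backFace (i+1) ρ) := by
  have hlen : i < (ρ.sort (· ≤ ·)).length := by rw [length_sort']; omega
  unfold backFace
  rw [List.drop_eq_getElem_cons hlen, toFinset_cons]

theorem getElem_not_mem_frontFace {i : ℕ} {ρ : Finset V} (h : i + 2 ≤ ρ.card) :
    (ρ.sort (· ≤ ·))[i+1]'(by rw [length_sort']; omega) ∉ frontFace i ρ := by
  intro hmem
  obtain ⟨k, hk, hki, hv⟩ := exists_idx_frontFace hmem
  have := ((nodup_sort' ρ).getElem_inj_iff).mp hv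
  omega

theorem getElem_not_mem_backFace {i : ℕ} {ρ : Finset V} (h : i + 1 ≤ ρ.card) :
    (ρ.sort (· ≤ ·))[i]'(by rw [length_sort']; omega) ∉ backFace (i+1) ρ := by
  intro hmem
  obtain ⟨k, hk, hki, hv⟩ := exists_idx_backFace hmem
  have := ((nodup_sort' ρ).getElem_inj_iff).mp hv
  omega

theorem frontFace_union_backFace (i : ℕ) (ρ : Finset V) :
    frontFace i ρ ∪ backFace (i+1) ρ = ρ := by
  unfold frontFace backFace
  rw [← toFinset_append, take_append_drop, Finset.sort_toFinset]

theorem frontFace_disjoint_backFace (i : ℕ) (ρ : Finset V) :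
    Disjoint (frontFace i ρ) (backFace (i+1) ρ) := by
  have hnd := nodup_sort' ρ
  rw [← take_append_drop (i+1) (ρ.sort (· ≤ ·)), nodup_append] at hnd
  rw [Finset.disjoint_left]
  intro a ha hb
  exact hnd.2.2 a (List.mem_toFinset.mp ha) a (List.mem_toFinset.mp hb) rfl

theorem card_frontFace {i : ℕ} {ρ : Finset V} (h : i + 1 ≤ ρ.card) :
    (frontFace i ρ).card = i + 1 := by
  unfold frontFace
  rw [toFinset_card_of_nodup ((nodup_sort' ρ).sublist (take_sublist _ _)), length_take,
      length_sort']
  omega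

theorem card_frontFace_le (i : ℕ) (ρ : Finset V) : (frontFace i ρ).card ≤ i + 1 := by
  unfold frontFace
  exact le_trans (List.toFinset_card_le _) (by rw [length_take]; omega)

theorem card_backFace (i : ℕ) (ρ : Finset V) : (backFace i ρ).card = ρ.card - i := by
  unfold backFace
  rw [toFinset_card_of_nodup ((nodup_sort' ρ).sublist (drop_sublist _ _)), length_drop,
      length_sort']

theorem frontFace_subset_frontFace {i j : ℕ} (h : i ≤ j) (ρ : Finset V) :
    frontFace i ρ ⊆ frontFace j ρ := by
  unfold frontFace
  intro x hx
  rw [List.mem_toFinset] at hx ⊢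
  exact (List.take_isPrefix_take.mpr (Or.inl (by omega))).sublist.subset hx


end ListFace
end SheafCup


namespace SheafCup
section Ev
variable {V : Type*} [Fintype V] [LinearOrder V]
variable {K : Type*} [Field K]
variable (X : Set (Finset V)) [DecidablePred (· ∈ X)] (t : ℕ)

/-- Proof-free evaluation of a cochain at a cell `c` and a top simplex `T`. -/
def ev (α : (σ : Finset V) → Up X σ t → K) (c T : Finset V) : K :=
  if h : T ∈ X ∧ c ⊆ T ∧ T.card = t + 1 then α c ⟨T, h.1, h.2.1, h.2.2⟩ else 0

theorem ev_eq (α : (σ : Finset V) → Up X σ t → K) (c T : Finset V)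
    (h₁ : T ∈ X) (h₂ : c ⊆ T) (h₃ : T.card = t + 1) :
    α c ⟨T, h₁, h₂, h₃⟩ = ev X t α c T := by
  rw [ev, dif_pos (⟨h₁, h₂, h₃⟩ : T ∈ X ∧ c ⊆ T ∧ T.card = t + 1)]

theorem ev_add (α β : (σ : Finset V) → Up X σ t → K) (c T : Finset V) :
    ev X t (α + β) c T = ev X t α c T + ev X t β c T := by
  unfold ev
  split
  · rfl
  · rw [add_zero]

theorem ev_cup (i : ℕ) (α β : (σ : Finset V) → Up X σ t → K) {c T : Finset V}
    (hT : T ∈ X) (hsub : c ⊆ T) (hTc : T.card = t + 1) :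
    ev X t (cup X t i α β) c T
      = ev X t α (frontFace i c) T * ev X t β (backFace i c) T := by
  rw [ev, dif_pos ⟨hT, hsub, hTc⟩, cup,
    ev_eq X t α _ T hT ((frontFace_subset i c).trans hsub) hTc,
    ev_eq X t β _ T hT ((backFace_subset i c).trans hsub) hTc]

theorem cobdry_apply
    (hdown : ∀ σ ∈ X, ∀ σ' : Finset V, σ' ⊆ σ → σ'.Nonempty → σ' ∈ X)
    (α : (σ : Finset V) → Up X σ t → K) (ρ : Finset V) (hρ : ρ ∈ X)
    (h2 : 2 ≤ ρ.card) (τ : Up X ρ t) :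
    cobdry X t α ρ τ = ∑ v ∈ ρ,
      α (ρ.erase v) ⟨τ.1, τ.2.1, (Finset.erase_subset v ρ).trans τ.2.2.1, τ.2.2.2⟩ := by
  have himg : ∀ σ : Finset V, (σ ∈ X ∧ σ ⊆ ρ ∧ σ.card + 1 = ρ.card) →
      σ ∈ ρ.image (ρ.erase ·) := by
    intro σ hσ
    have hsd : (ρ \ σ).Nonempty := by
      rw [← Finset.card_pos, Finset.card_sdiff_of_subset hσ.2.1]
      omega
    obtain ⟨v, hv⟩ := hsd
    rw [Finset.mem_sdiff] at hv
    have hsub : σ ⊆ ρ.erase v := by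
      intro x hx
      rw [Finset.mem_erase]
      exact ⟨fun hxv => hv.2 (hxv ▸ hx), hσ.2.1 hx⟩
    have hcard : (ρ.erase v).card = σ.card := by
      rw [Finset.card_erase_of_mem hv.1]; omega
    have : σ = ρ.erase v := Finset.eq_of_subset_of_card_le hsub (le_of_eq hcard)
    exact Finset.mem_image.mpr ⟨v, hv.1, this.symm⟩
  rw [cobdry]
  calc (∑ σ : Finset V, if h : σ ∈ X ∧ σ ⊆ ρ ∧ σ.card + 1 = ρ.card
          then α σ ⟨τ.1, τ.2.1, h.2.1.trans τ.2.2.1, τ.2.2.2⟩ else 0)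
      = ∑ σ ∈ ρ.image (ρ.erase ·), if h : σ ∈ X ∧ σ ⊆ ρ ∧ σ.card + 1 = ρ.card
          then α σ ⟨τ.1, τ.2.1, h.2.1.trans τ.2.2.1, τ.2.2.2⟩ else 0 := by
        refine (Finset.sum_subset (Finset.subset_univ _) ?_).symm
        intro σ _ hσ
        rw [dif_neg]
        intro h
        exact hσ (himg σ h)
    _ = ∑ v ∈ ρ, if h : ρ.erase v ∈ X ∧ ρ.erase v ⊆ ρ ∧ (ρ.erase v).card + 1 = ρ.card
          then α (ρ.erase v) ⟨τ.1, τ.2.1, h.2.1.trans τ.2.2.1, τ.2.2.2⟩ else 0 := by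
        refine Finset.sum_image ?_
        intro x hx y hy hxy
        by_contra hne
        have : x ∈ ρ.erase x := by rw [show ρ.erase x = ρ.erase y from hxy]; exact Finset.mem_erase.mpr ⟨hne, hx⟩
        exact (Finset.mem_erase.mp this).1 rfl
    _ = _ := by
        refine Finset.sum_congr rfl (fun v hv => ?_)
        rw [dif_pos ⟨hdown ρ hρ _ (Finset.erase_subset v ρ)
              (by rw [← Finset.card_pos, Finset.card_erase_of_mem hv]; omega),
            Finset.erase_subset v ρ,
            by rw [Finset.card_erase_of_mem hv]; omega⟩]

theorem ev_cobdry
    (hdown : ∀ σ ∈ X, ∀ σ' : Finset V, σ' ⊆ σ → σ'.Nonempty → σ' ∈ X)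
    (α : (σ : Finset V) → Up X σ t → K) {ρ T : Finset V} (hρ : ρ ∈ X)
    (h2 : 2 ≤ ρ.card) (hT : T ∈ X) (hsub : ρ ⊆ T) (hTc : T.card = t + 1) :
    ev X t (cobdry X t α) ρ T = ∑ v ∈ ρ, ev X t α (ρ.erase v) T := by
  rw [ev, dif_pos ⟨hT, hsub, hTc⟩, cobdry_apply X t hdown α ρ hρ h2]
  exact Finset.sum_congr rfl fun v hv =>
    ev_eq X t α _ T hT ((Finset.erase_subset v ρ).trans hsub) hTc

theorem ev_cobdry_zero_of_card_le_one
    (hne : ∀ σ ∈ X, σ.Nonempty)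
    (α : (σ : Finset V) → Up X σ t → K) {c : Finset V} (hc : c.card ≤ 1)
    (T : Finset V) : ev X t (cobdry X t α) c T = 0 := by
  rw [ev]
  split
  · rw [cobdry]
    refine Finset.sum_eq_zero fun σ _ => ?_
    rw [dif_neg]
    intro h
    have : σ = ∅ := Finset.card_eq_zero.mp (by omega)
    exact Finset.not_nonempty_empty (this ▸ hne σ h.1)
  · rfl

theorem sum_split (i : ℕ) (ρ : Finset V) (f : V → K) :
    ∑ v ∈ ρ, f v = ∑ v ∈ frontFace i ρ, f v + ∑ v ∈ backFace (i+1) ρ, f v := by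
  conv_lhs => rw [← frontFace_union_backFace i ρ]
  rw [Finset.sum_union (frontFace_disjoint_backFace i ρ)]

theorem sum_insert_front {i : ℕ} {ρ : Finset V} (h : i + 2 ≤ ρ.card) (f : V → K) :
    ∑ v ∈ frontFace (i+1) ρ, f v
      = f ((ρ.sort (· ≤ ·))[i+1]'(by rw [length_sort']; omega)) + ∑ v ∈ frontFace i ρ, f v := by
  rw [frontFace_succ_insert h]
  exact Finset.sum_insert (getElem_not_mem_frontFace h)

theorem sum_insert_back {i : ℕ} {ρ : Finset V} (h : i + 1 ≤ ρ.card) (f : V → K) :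
    ∑ v ∈ backFace i ρ, f v
      = f ((ρ.sort (· ≤ ·))[i]'(by rw [length_sort']; omega)) + ∑ v ∈ backFace (i+1) ρ, f v := by
  rw [backFace_insert h]
  exact Finset.sum_insert (getElem_not_mem_backFace h)

theorem leibniz_ev [CharP K 2]
    (hdown : ∀ σ ∈ X, ∀ σ' : Finset V, σ' ⊆ σ → σ'.Nonempty → σ' ∈ X)
    (i j : ℕ) (α β : (σ : Finset V) → Up X σ t → K)
    {ρ T : Finset V} (hρ : ρ ∈ X) (hc : ρ.card = i + j + 2)
    (hT : T ∈ X) (hsub : ρ ⊆ T) (hTc : T.card = t + 1) :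
    ev X t (cobdry X t (cup X t i α β)) ρ T
      = ev X t (cobdry X t α) (frontFace (i+1) ρ) T * ev X t β (backFace (i+1) ρ) T
        + ev X t α (frontFace i ρ) T * ev X t (cobdry X t β) (backFace i ρ) T := by
  have hF1sub := frontFace_subset (i+1) ρ
  have hF1card : (frontFace (i+1) ρ).card = i+1+1 := card_frontFace (by omega)
  have hF1X : frontFace (i+1) ρ ∈ X :=
    hdown ρ hρ _ hF1sub (Finset.card_pos.mp (by rw [hF1card]; omega))
  have hB0card : (backFace i ρ).card = ρ.card - i := card_backFace i ρ
  have hB0X : backFace i ρ ∈ X :=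
    hdown ρ hρ _ (backFace_subset i ρ) (Finset.card_pos.mp (by rw [hB0card]; omega))
  rw [ev_cobdry X t hdown _ hρ (by omega) hT hsub hTc,
      ev_cobdry X t hdown α hF1X (by omega) hT (hF1sub.trans hsub) hTc,
      ev_cobdry X t hdown β hB0X (by omega) hT ((backFace_subset i ρ).trans hsub) hTc,
      Finset.sum_mul, Finset.mul_sum, sum_split i ρ]
  have hfront : ∀ v ∈ frontFace i ρ,
      ev X t (cup X t i α β) (ρ.erase v) T
        = ev X t α ((frontFace (i+1) ρ).erase v) T * ev X t β (backFace (i+1) ρ) T := by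
    intro v hv
    rw [ev_cup X t i α β hT ((Finset.erase_subset v ρ).trans hsub) hTc,
        frontFace_erase_lo (frontFace_subset_frontFace (by omega) ρ hv),
        backFace_erase_lo hv]
  have hback : ∀ v ∈ backFace (i+1) ρ,
      ev X t (cup X t i α β) (ρ.erase v) T
        = ev X t α (frontFace i ρ) T * ev X t β ((backFace i ρ).erase v) T := by
    intro v hv
    rw [ev_cup X t i α β hT ((Finset.erase_subset v ρ).trans hsub) hTc,
        frontFace_erase_hi hv, backFace_erase_hi hv]
  rw [Finset.sum_congr rfl hfront, Finset.sum_congr rfl hback,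
      sum_insert_front (show i+2 ≤ ρ.card by omega),
      sum_insert_back (show i+1 ≤ ρ.card by omega),
      frontFace_erase_top (show i+2 ≤ ρ.card by omega),
      backFace_erase_bot (show i+1 ≤ ρ.card by omega)]
  linear_combination
    -CharTwo.add_self_eq_zero (ev X t α (frontFace i ρ) T * ev X t β (backFace (i+1) ρ) T)

theorem cobdry_add (α β : (σ : Finset V) → Up X σ t → K) (ρ : Finset V) (τ : Up X ρ t) :
    cobdry X t (α + β) ρ τ = cobdry X t α ρ τ + cobdry X t β ρ τ := by
  rw [cobdry, cobdry, cobdry, ← Finset.sum_add_distrib]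
  refine Finset.sum_congr rfl fun σ _ => ?_
  by_cases h : σ ∈ X ∧ σ ⊆ ρ ∧ σ.card + 1 = ρ.card
  · rw [dif_pos h, dif_pos h, dif_pos h]; rfl
  · rw [dif_neg h, dif_neg h, dif_neg h, add_zero]

theorem cobdry_zero_of_card_le_one (hne : ∀ σ ∈ X, σ.Nonempty)
    (α : (σ : Finset V) → Up X σ t → K) {c : Finset V} (hc : c.card ≤ 1)
    (τ : Up X c t) : cobdry X t α c τ = 0 := by
  rw [cobdry]
  refine Finset.sum_eq_zero fun σ _ => ?_
  rw [dif_neg]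
  intro h
  have : σ = ∅ := Finset.card_eq_zero.mp (by omega)
  exact Finset.not_nonempty_empty (this ▸ hne σ h.1)

theorem dd_zero [CharP K 2] (hne : ∀ σ ∈ X, σ.Nonempty)
    (hdown : ∀ σ ∈ X, ∀ σ' : Finset V, σ' ⊆ σ → σ'.Nonempty → σ' ∈ X)
    (γ : (σ : Finset V) → Up X σ t → K) (ρ : Finset V) (hρ : ρ ∈ X)
    (h2 : 2 ≤ ρ.card) (τ : Up X ρ t) :
    cobdry X t (cobdry X t γ) ρ τ = 0 := by
  have key : ∀ (c₁ c₂ : Finset V) (h : c₁ = c₂)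
      (h₁ : τ.1 ∈ X ∧ c₁ ⊆ τ.1 ∧ τ.1.card = t + 1)
      (h₂ : τ.1 ∈ X ∧ c₂ ⊆ τ.1 ∧ τ.1.card = t + 1),
      γ c₁ ⟨τ.1, h₁⟩ = γ c₂ ⟨τ.1, h₂⟩ := by
    intro c₁ c₂ h h₁ h₂
    subst h
    rfl
  rw [cobdry_apply X t hdown _ ρ hρ h2 τ]
  rcases Nat.lt_or_ge ρ.card 3 with h3 | h3
  · refine Finset.sum_eq_zero fun v hv => ?_
    exact cobdry_zero_of_card_le_one X t hne γ
      (by rw [Finset.card_erase_of_mem hv]; omega) _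
  · have h4 : ∀ v ∈ ρ, cobdry X t γ (ρ.erase v)
        ⟨τ.1, τ.2.1, (Finset.erase_subset v ρ).trans τ.2.2.1, τ.2.2.2⟩
        = ∑ w ∈ ρ.erase v, γ ((ρ.erase v).erase w)
            ⟨τ.1, τ.2.1, (Finset.erase_subset w (ρ.erase v)).trans
              ((Finset.erase_subset v ρ).trans τ.2.2.1), τ.2.2.2⟩ := by
      intro v hv
      exact cobdry_apply X t hdown γ (ρ.erase v)
        (hdown ρ hρ _ (Finset.erase_subset v ρ)
          (Finset.card_pos.mp (by rw [Finset.card_erase_of_mem hv]; omega)))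
        (by rw [Finset.card_erase_of_mem hv]; omega) _
    rw [Finset.sum_congr rfl h4, Finset.sum_sigma' ρ (fun v => ρ.erase v)]
    refine Finset.sum_involution (fun p _ => ⟨p.2, p.1⟩) ?_ ?_ ?_ ?_
    · intro p hp
      rw [Finset.mem_sigma] at hp
      have hne' : p.2 ≠ p.1 := (Finset.mem_erase.mp hp.2).1
      rw [key ((ρ.erase p.1).erase p.2) ((ρ.erase p.2).erase p.1)
            Finset.erase_right_comm _ _]
      exact CharTwo.add_self_eq_zero _
    · intro p hp _
      rw [Finset.mem_sigma] at hp
      have hne' : p.2 ≠ p.1 := (Finset.mem_erase.mp hp.2).1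
      intro hcon
      rw [Sigma.ext_iff] at hcon
      exact hne' (by simpa using hcon.1)
    · intro p hp
      rw [Finset.mem_sigma] at hp ⊢
      have hne' : p.2 ≠ p.1 := (Finset.mem_erase.mp hp.2).1
      exact ⟨(Finset.mem_erase.mp hp.2).2, Finset.mem_erase.mpr ⟨hne'.symm, hp.1⟩⟩
    · intro p hp
      rfl

theorem cocycle_add [CharP K 2] (hne : ∀ σ ∈ X, σ.Nonempty)
    (hdown : ∀ σ ∈ X, ∀ σ' : Finset V, σ' ⊆ σ → σ'.Nonempty → σ' ∈ X)
    (ζ γ : (σ : Finset V) → Up X σ t → K) (ℓ : ℕ)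
    (hz : ∀ ρ ∈ X, ρ.card = ℓ + 2 → ∀ τ : Up X ρ t, cobdry X t ζ ρ τ = 0) :
    ∀ ρ ∈ X, ρ.card = ℓ + 2 → ∀ τ : Up X ρ t,
      cobdry X t (ζ + cobdry X t γ) ρ τ = 0 := by
  intro ρ hρ hc τ
  rw [cobdry_add, hz ρ hρ hc τ, dd_zero X t hne hdown γ ρ hρ (by omega) τ, add_zero]

theorem ev_cobdry_zero' (g : (σ : Finset V) → Up X σ t → K) (c : Finset V)
    (hz : ∀ τ' : Up X c t, cobdry X t g c τ' = 0) (T : Finset V) :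
    ev X t (cobdry X t g) c T = 0 := by
  rw [ev]
  split
  · exact hz _
  · rfl

theorem sum_subtype' (p : Finset V → Prop) [DecidablePred p] (f : Finset V → K) :
    ∑ x : {T : Finset V // p T}, f x.1 = ∑ T : Finset V, if p T then f T else 0 := by
  rw [← Finset.sum_filter]
  exact (Finset.sum_subtype (Finset.univ.filter p) (fun x => by simp) f).symm

theorem sum_cobdry_zero (H : (σ : Finset V) → Up X σ t → K)
    (hH : ∀ σ ∈ X, σ.card = t → ∑ τ' : Up X σ t, H σ τ' = 0) :
    ∑ τ : {τ : Finset V // τ ∈ X ∧ τ.card = t + 1},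
      ev X t (cobdry X t H) τ.1 τ.1 = 0 := by
  have step1 : ∀ τ : {τ : Finset V // τ ∈ X ∧ τ.card = t + 1},
      ev X t (cobdry X t H) τ.1 τ.1 = ∑ σ : Finset V,
        if σ ∈ X ∧ σ ⊆ τ.1 ∧ σ.card + 1 = τ.1.card then ev X t H σ τ.1 else 0 := by
    intro τ
    rw [ev, dif_pos (⟨τ.2.1, subset_rfl, τ.2.2⟩ : τ.1 ∈ X ∧ τ.1 ⊆ τ.1 ∧ τ.1.card = t + 1),
        cobdry]
    refine Finset.sum_congr rfl fun σ _ => ?_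
    by_cases h : σ ∈ X ∧ σ ⊆ τ.1 ∧ σ.card + 1 = τ.1.card
    · rw [dif_pos h, if_pos h]
      exact ev_eq X t H σ τ.1 τ.2.1 h.2.1 τ.2.2
    · rw [dif_neg h, if_neg h]
  rw [Finset.sum_congr rfl fun τ _ => step1 τ, Finset.sum_comm]
  refine Finset.sum_eq_zero fun σ _ => ?_
  by_cases hσ : σ ∈ X ∧ σ.card = t
  · have e1 : ∀ τ : {τ : Finset V // τ ∈ X ∧ τ.card = t + 1},
        (if σ ∈ X ∧ σ ⊆ τ.1 ∧ σ.card + 1 = τ.1.card then ev X t H σ τ.1 else 0)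
          = (fun T => if σ ∈ X ∧ σ ⊆ T ∧ σ.card + 1 = T.card then ev X t H σ T else 0) τ.1 :=
      fun τ => rfl
    rw [Finset.sum_congr rfl fun τ _ => e1 τ,
        sum_subtype' (fun T => T ∈ X ∧ T.card = t + 1)
          (fun T => if σ ∈ X ∧ σ ⊆ T ∧ σ.card + 1 = T.card then ev X t H σ T else 0)]
    have e2 : ∀ T : Finset V,
        (if T ∈ X ∧ T.card = t + 1 then
          (if σ ∈ X ∧ σ ⊆ T ∧ σ.card + 1 = T.card then ev X t H σ T else 0) else 0)
        = (if T ∈ X ∧ σ ⊆ T ∧ T.card = t + 1 then (fun S => ev X t H σ S) T else 0) := by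
      intro T
      by_cases h1 : T ∈ X ∧ T.card = t + 1
      · by_cases h2 : σ ⊆ T
        · rw [if_pos h1, if_pos ⟨hσ.1, h2, by omega⟩, if_pos ⟨h1.1, h2, h1.2⟩]
        · rw [if_pos h1, if_neg (by tauto), if_neg (by tauto)]
      · rw [if_neg h1, if_neg (by tauto)]
    rw [Finset.sum_congr rfl fun T _ => e2 T,
        ← sum_subtype' (fun T => T ∈ X ∧ σ ⊆ T ∧ T.card = t + 1) (fun S => ev X t H σ S)]
    have e3 : ∀ τ' : Up X σ t, ev X t H σ τ'.1 = H σ τ' := by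
      intro τ'
      exact (ev_eq X t H σ τ'.1 τ'.2.1 τ'.2.2.1 τ'.2.2.2).symm
    rw [Finset.sum_congr rfl fun τ' _ => e3 τ']
    exact hH σ hσ.1 hσ.2
  · refine Finset.sum_eq_zero fun τ _ => ?_
    rw [if_neg]
    intro h
    exact hσ ⟨h.1, by have := τ.2.2; omega⟩

theorem isSection_add (C : (σ' : Finset V) → Submodule K (Up X σ' t → K))
    {σ : Finset V} {c c' : Up X σ t → K}
    (h : IsSection X t (fun σ' => (C σ' : Set (Up X σ' t → K))) σ c)
    (h' : IsSection X t (fun σ' => (C σ' : Set (Up X σ' t → K))) σ c') :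
    IsSection X t (fun σ' => (C σ' : Set (Up X σ' t → K))) σ (c + c') := by
  intro σ' h1 h2 h3
  exact Submodule.add_mem _ (h σ' h1 h2 h3) (h' σ' h1 h2 h3)

theorem isSection_cobdry (C : (σ' : Finset V) → Submodule K (Up X σ' t → K))
    (γ : (σ : Finset V) → Up X σ t → K) (ℓ : ℕ)
    (hγ : ∀ σ ∈ X, σ.card = ℓ → IsSection X t (fun σ' => (C σ' : Set (Up X σ' t → K))) σ (γ σ))
    {σ : Finset V} (hσ : σ ∈ X) (hc : σ.card = ℓ + 1) :
    IsSection X t (fun σ' => (C σ' : Set (Up X σ' t → K))) σ (cobdry X t γ σ) := by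
  intro σ'' h1 h2 h3
  have hfun : (fun τ : Up X σ'' t =>
        cobdry X t γ σ ⟨τ.1, τ.2.1, h3.trans τ.2.2.1, τ.2.2.2⟩)
      = ∑ s : Finset V, (fun τ : Up X σ'' t =>
          if h : s ∈ X ∧ s ⊆ σ ∧ s.card + 1 = σ.card
          then γ s ⟨τ.1, τ.2.1, (h.2.1.trans h3).trans τ.2.2.1, τ.2.2.2⟩ else 0) := by
    funext τ
    rw [Finset.sum_apply]
    rfl
  rw [hfun]
  refine Submodule.sum_mem _ fun s _ => ?_
  by_cases h : s ∈ X ∧ s ⊆ σ ∧ s.card + 1 = σ.card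
  · simp only [dif_pos h]
    exact hγ s h.1 (by omega) σ'' h1 h2 (h.2.1.trans h3)
  · simp only [dif_neg h]
    exact Submodule.zero_mem _

theorem sum_up_zero
    (hdown : ∀ σ ∈ X, ∀ σ' : Finset V, σ' ⊆ σ → σ'.Nonempty → σ' ∈ X)
    (C₁ C₂ C₃ C₄ : (σ' : Finset V) → Submodule K (Up X σ' t → K))
    (horth : ∀ σ ∈ X, σ.card = t →
      ∀ c₁ ∈ C₁ σ, ∀ c₂ ∈ C₂ σ, ∀ c₃ ∈ C₃ σ, ∀ c₄ ∈ C₄ σ,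
        ∑ τ : Up X σ t, c₁ τ * c₂ τ * c₃ τ * c₄ τ = 0)
    (d₁ d₂ d₃ d₄ : ℕ) (ht : d₁ + d₂ + d₃ + d₄ + 1 = t)
    (g₁ g₂ g₃ g₄ : (σ : Finset V) → Up X σ t → K)
    (hs₁ : ∀ σ ∈ X, σ.card = d₁ + 1 →
      IsSection X t (fun σ' => (C₁ σ' : Set (Up X σ' t → K))) σ (g₁ σ))
    (hs₂ : ∀ σ ∈ X, σ.card = d₂ + 1 →
      IsSection X t (fun σ' => (C₂ σ' : Set (Up X σ' t → K))) σ (g₂ σ))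
    (hs₃ : ∀ σ ∈ X, σ.card = d₃ + 1 →
      IsSection X t (fun σ' => (C₃ σ' : Set (Up X σ' t → K))) σ (g₃ σ))
    (hs₄ : ∀ σ ∈ X, σ.card = d₄ + 1 →
      IsSection X t (fun σ' => (C₄ σ' : Set (Up X σ' t → K))) σ (g₄ σ))
    {σ : Finset V} (hσ : σ ∈ X) (hc : σ.card = t) :
    ∑ τ' : Up X σ t,
      cup X t (d₁+d₂+d₃) (cup X t (d₁+d₂) (cup X t d₁ g₁ g₂) g₃) g₄ σ τ' = 0 := by
  have hσne : σ.Nonempty := Finset.card_pos.mp (by omega)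
  set A := frontFace (d₁+d₂+d₃) σ with hA
  have cardA : A.card = d₁+d₂+d₃+1 := card_frontFace (by omega)
  have Asub : A ⊆ σ := frontFace_subset _ _
  have AX : A ∈ X := hdown σ hσ _ Asub (Finset.card_pos.mp (by omega))
  set B := frontFace (d₁+d₂) A with hB
  have cardB : B.card = d₁+d₂+1 := card_frontFace (by omega)
  have Bsub : B ⊆ σ := (frontFace_subset _ _).trans Asub
  have BX : B ∈ X := hdown σ hσ _ Bsub (Finset.card_pos.mp (by omega))
  -- faces
  have cardf1 : (frontFace d₁ B).card = d₁+1 := card_frontFace (by omega)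
  have f1sub : frontFace d₁ B ⊆ σ := (frontFace_subset _ _).trans Bsub
  have f1X : frontFace d₁ B ∈ X := hdown σ hσ _ f1sub (Finset.card_pos.mp (by omega))
  have cardf2 : (backFace d₁ B).card = d₂+1 := by rw [card_backFace, cardB]; omega
  have f2sub : backFace d₁ B ⊆ σ := (backFace_subset _ _).trans Bsub
  have f2X : backFace d₁ B ∈ X := hdown σ hσ _ f2sub (Finset.card_pos.mp (by omega))
  have cardf3 : (backFace (d₁+d₂) A).card = d₃+1 := by rw [card_backFace, cardA]; omega
  have f3sub : backFace (d₁+d₂) A ⊆ σ := (backFace_subset _ _).trans Asub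
  have f3X : backFace (d₁+d₂) A ∈ X := hdown σ hσ _ f3sub (Finset.card_pos.mp (by omega))
  have cardf4 : (backFace (d₁+d₂+d₃) σ).card = d₄+1 := by rw [card_backFace]; omega
  have f4sub : backFace (d₁+d₂+d₃) σ ⊆ σ := backFace_subset _ _
  have f4X : backFace (d₁+d₂+d₃) σ ∈ X := hdown σ hσ _ f4sub (Finset.card_pos.mp (by omega))
  have h₁ := hs₁ _ f1X cardf1 σ hσ hc f1sub
  have h₂ := hs₂ _ f2X cardf2 σ hσ hc f2sub
  have h₃ := hs₃ _ f3X cardf3 σ hσ hc f3sub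
  have h₄ := hs₄ _ f4X cardf4 σ hσ hc f4sub
  exact horth σ hσ hc _ h₁ _ h₂ _ h₃ _ h₄

theorem expansion_ev [CharP K 2]
    (hdown : ∀ σ ∈ X, ∀ σ' : Finset V, σ' ⊆ σ → σ'.Nonempty → σ' ∈ X)
    (d₁ d₂ d₃ d₄ : ℕ) (ht : d₁ + d₂ + d₃ + d₄ + 1 = t)
    (g₁ g₂ g₃ g₄ : (σ : Finset V) → Up X σ t → K)
    {ρ T : Finset V} (hρ : ρ ∈ X) (hc : ρ.card = t + 1)
    (hT : T ∈ X) (hsub : ρ ⊆ T) (hTc : T.card = t + 1) :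
    ev X t (cobdry X t (cup X t (d₁+d₂+d₃) (cup X t (d₁+d₂) (cup X t d₁ g₁ g₂) g₃) g₄)) ρ T
    = ev X t (cobdry X t g₁)
          (frontFace (d₁+1) (frontFace (d₁+d₂+1) (frontFace (d₁+d₂+d₃+1) ρ))) T
        * ev X t g₂ (backFace (d₁+1) (frontFace (d₁+d₂+1) (frontFace (d₁+d₂+d₃+1) ρ))) T
        * ev X t g₃ (backFace (d₁+d₂+1) (frontFace (d₁+d₂+d₃+1) ρ)) T
        * ev X t g₄ (backFace (d₁+d₂+d₃+1) ρ) T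
    + ev X t g₁ (frontFace d₁ (frontFace (d₁+d₂+1) (frontFace (d₁+d₂+d₃+1) ρ))) T
        * ev X t (cobdry X t g₂)
          (backFace d₁ (frontFace (d₁+d₂+1) (frontFace (d₁+d₂+d₃+1) ρ))) T
        * ev X t g₃ (backFace (d₁+d₂+1) (frontFace (d₁+d₂+d₃+1) ρ)) T
        * ev X t g₄ (backFace (d₁+d₂+d₃+1) ρ) T
    + ev X t g₁ (frontFace d₁ (frontFace (d₁+d₂) (frontFace (d₁+d₂+d₃+1) ρ))) T
        * ev X t g₂ (backFace d₁ (frontFace (d₁+d₂) (frontFace (d₁+d₂+d₃+1) ρ))) T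
        * ev X t (cobdry X t g₃) (backFace (d₁+d₂) (frontFace (d₁+d₂+d₃+1) ρ)) T
        * ev X t g₄ (backFace (d₁+d₂+d₃+1) ρ) T
    + ev X t g₁ (frontFace d₁ (frontFace (d₁+d₂) (frontFace (d₁+d₂+d₃) ρ))) T
        * ev X t g₂ (backFace d₁ (frontFace (d₁+d₂) (frontFace (d₁+d₂+d₃) ρ))) T
        * ev X t g₃ (backFace (d₁+d₂) (frontFace (d₁+d₂+d₃) ρ)) T
        * ev X t (cobdry X t g₄) (backFace (d₁+d₂+d₃) ρ) T := by
  have cardA : (frontFace (d₁+d₂+d₃+1) ρ).card = d₁+d₂+d₃+2 := card_frontFace (by omega)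
  have Asub : frontFace (d₁+d₂+d₃+1) ρ ⊆ ρ := frontFace_subset _ _
  have AX : frontFace (d₁+d₂+d₃+1) ρ ∈ X :=
    hdown ρ hρ _ Asub (Finset.card_pos.mp (by omega))
  have cardA2 : (frontFace (d₁+d₂+d₃) ρ).card = d₁+d₂+d₃+1 := card_frontFace (by omega)
  have A2sub : frontFace (d₁+d₂+d₃) ρ ⊆ ρ := frontFace_subset _ _
  have A2X : frontFace (d₁+d₂+d₃) ρ ∈ X :=
    hdown ρ hρ _ A2sub (Finset.card_pos.mp (by omega))
  have cardB : (frontFace (d₁+d₂+1) (frontFace (d₁+d₂+d₃+1) ρ)).card = d₁+d₂+2 :=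
    card_frontFace (by omega)
  have Bsub : frontFace (d₁+d₂+1) (frontFace (d₁+d₂+d₃+1) ρ) ⊆ ρ :=
    (frontFace_subset _ _).trans Asub
  have BX : frontFace (d₁+d₂+1) (frontFace (d₁+d₂+d₃+1) ρ) ∈ X :=
    hdown ρ hρ _ Bsub (Finset.card_pos.mp (by omega))
  rw [leibniz_ev X t hdown (d₁+d₂+d₃) d₄ _ g₄ hρ (by omega) hT hsub hTc,
      leibniz_ev X t hdown (d₁+d₂) d₃ _ g₃ AX (by omega) hT (Asub.trans hsub) hTc,
      leibniz_ev X t hdown d₁ d₂ g₁ g₂ BX (by omega) hT (Bsub.trans hsub) hTc,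
      ev_cup X t (d₁+d₂) _ g₃ hT (A2sub.trans hsub) hTc,
      ev_cup X t d₁ g₁ g₂ (c := frontFace (d₁+d₂) (frontFace (d₁+d₂+d₃+1) ρ)) hT
        ((frontFace_subset _ _).trans (Asub.trans hsub)) hTc,
      ev_cup X t d₁ g₁ g₂ (c := frontFace (d₁+d₂) (frontFace (d₁+d₂+d₃) ρ)) hT
        ((frontFace_subset _ _).trans (A2sub.trans hsub)) hTc]
  ring

theorem keyZero1 [CharP K 2] (hne : ∀ σ ∈ X, σ.Nonempty)
    (hdown : ∀ σ ∈ X, ∀ σ' : Finset V, σ' ⊆ σ → σ'.Nonempty → σ' ∈ X)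
    (C₁ C₂ C₃ C₄ : (σ' : Finset V) → Submodule K (Up X σ' t → K))
    (horth : ∀ σ ∈ X, σ.card = t →
      ∀ c₁ ∈ C₁ σ, ∀ c₂ ∈ C₂ σ, ∀ c₃ ∈ C₃ σ, ∀ c₄ ∈ C₄ σ,
        ∑ τ : Up X σ t, c₁ τ * c₂ τ * c₃ τ * c₄ τ = 0)
    (d₁ d₂ d₃ d₄ : ℕ) (ht : d₁ + d₂ + d₃ + d₄ + 1 = t)
    (g₁ g₂ g₃ g₄ : (σ : Finset V) → Up X σ t → K)
    (hs₁ : ∀ σ ∈ X, σ.card = d₁ + 1 →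
      IsSection X t (fun σ' => (C₁ σ' : Set (Up X σ' t → K))) σ (g₁ σ))
    (hs₂ : ∀ σ ∈ X, σ.card = d₂ + 1 →
      IsSection X t (fun σ' => (C₂ σ' : Set (Up X σ' t → K))) σ (g₂ σ))
    (hs₃ : ∀ σ ∈ X, σ.card = d₃ + 1 →
      IsSection X t (fun σ' => (C₃ σ' : Set (Up X σ' t → K))) σ (g₃ σ))
    (hs₄ : ∀ σ ∈ X, σ.card = d₄ + 1 →
      IsSection X t (fun σ' => (C₄ σ' : Set (Up X σ' t → K))) σ (g₄ σ))
    (hz₂ : ∀ ρ ∈ X, ρ.card = d₂ + 2 → ∀ τ : Up X ρ t, cobdry X t g₂ ρ τ = 0)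
    (hz₃ : ∀ ρ ∈ X, ρ.card = d₃ + 2 → ∀ τ : Up X ρ t, cobdry X t g₃ ρ τ = 0)
    (hz₄ : ∀ ρ ∈ X, ρ.card = d₄ + 2 → ∀ τ : Up X ρ t, cobdry X t g₄ ρ τ = 0) :
    ∑ τ : {τ : Finset V // τ ∈ X ∧ τ.card = t + 1},
      ev X t (cup X t (d₁+d₂+d₃+1)
        (cup X t (d₁+d₂+1) (cup X t (d₁+1) (cobdry X t g₁) g₂) g₃) g₄) τ.1 τ.1 = 0 := by
  have hcells : ∀ τ : {τ : Finset V // τ ∈ X ∧ τ.card = t + 1},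
      (frontFace (d₁+d₂+d₃+1) τ.1).card = d₁+d₂+d₃+2 ∧
      frontFace (d₁+d₂+d₃+1) τ.1 ⊆ τ.1 ∧
      (frontFace (d₁+d₂+1) (frontFace (d₁+d₂+d₃+1) τ.1)).card = d₁+d₂+2 ∧
      frontFace (d₁+d₂+1) (frontFace (d₁+d₂+d₃+1) τ.1) ⊆ τ.1 := by
    intro τ
    have c1 : (frontFace (d₁+d₂+d₃+1) τ.1).card = d₁+d₂+d₃+2 :=
      card_frontFace (by have := τ.2.2; omega)
    have s1 : frontFace (d₁+d₂+d₃+1) τ.1 ⊆ τ.1 := frontFace_subset _ _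
    have c2 : (frontFace (d₁+d₂+1) (frontFace (d₁+d₂+d₃+1) τ.1)).card = d₁+d₂+2 :=
      card_frontFace (by omega)
    exact ⟨c1, s1, c2, (frontFace_subset _ _).trans s1⟩
  have v2 : ∀ τ : {τ : Finset V // τ ∈ X ∧ τ.card = t + 1},
      ev X t (cobdry X t g₂)
        (backFace d₁ (frontFace (d₁+d₂+1) (frontFace (d₁+d₂+d₃+1) τ.1))) τ.1 = 0 := by
    intro τ
    obtain ⟨c1, s1, c2, s2⟩ := hcells τ
    have ccard : (backFace d₁ (frontFace (d₁+d₂+1) (frontFace (d₁+d₂+d₃+1) τ.1))).card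
        = d₂ + 2 := by rw [card_backFace, c2]; omega
    have csub : backFace d₁ (frontFace (d₁+d₂+1) (frontFace (d₁+d₂+d₃+1) τ.1)) ⊆ τ.1 :=
      (backFace_subset _ _).trans s2
    exact ev_cobdry_zero' X t g₂ _
      (hz₂ _ (hdown τ.1 τ.2.1 _ csub (Finset.card_pos.mp (by omega))) ccard) τ.1
  have v3 : ∀ τ : {τ : Finset V // τ ∈ X ∧ τ.card = t + 1},
      ev X t (cobdry X t g₃) (backFace (d₁+d₂) (frontFace (d₁+d₂+d₃+1) τ.1)) τ.1 = 0 := by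
    intro τ
    obtain ⟨c1, s1, c2, s2⟩ := hcells τ
    have ccard : (backFace (d₁+d₂) (frontFace (d₁+d₂+d₃+1) τ.1)).card = d₃ + 2 := by
      rw [card_backFace, c1]; omega
    have csub : backFace (d₁+d₂) (frontFace (d₁+d₂+d₃+1) τ.1) ⊆ τ.1 :=
      (backFace_subset _ _).trans s1
    exact ev_cobdry_zero' X t g₃ _
      (hz₃ _ (hdown τ.1 τ.2.1 _ csub (Finset.card_pos.mp (by omega))) ccard) τ.1
  have v4 : ∀ τ : {τ : Finset V // τ ∈ X ∧ τ.card = t + 1},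
      ev X t (cobdry X t g₄) (backFace (d₁+d₂+d₃) τ.1) τ.1 = 0 := by
    intro τ
    have ccard : (backFace (d₁+d₂+d₃) τ.1).card = d₄ + 2 := by
      rw [card_backFace]; have := τ.2.2; omega
    have csub : backFace (d₁+d₂+d₃) τ.1 ⊆ τ.1 := backFace_subset _ _
    exact ev_cobdry_zero' X t g₄ _
      (hz₄ _ (hdown τ.1 τ.2.1 _ csub (Finset.card_pos.mp (by omega))) ccard) τ.1
  have h0 := sum_cobdry_zero X t
    (cup X t (d₁+d₂+d₃) (cup X t (d₁+d₂) (cup X t d₁ g₁ g₂) g₃) g₄)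
    (fun σ hσ hc => sum_up_zero X t hdown C₁ C₂ C₃ C₄ horth d₁ d₂ d₃ d₄ ht
      g₁ g₂ g₃ g₄ hs₁ hs₂ hs₃ hs₄ hσ hc)
  rw [Finset.sum_congr rfl (fun τ _ => expansion_ev X t hdown d₁ d₂ d₃ d₄ ht
    g₁ g₂ g₃ g₄ τ.2.1 τ.2.2 τ.2.1 subset_rfl τ.2.2)] at h0
  simp only [v2, v3, v4, mul_zero, zero_mul, add_zero, zero_add] at h0
  have f1 : ∀ τ : {τ : Finset V // τ ∈ X ∧ τ.card = t + 1},
      ev X t (cup X t (d₁+d₂+d₃+1)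
          (cup X t (d₁+d₂+1) (cup X t (d₁+1) (cobdry X t g₁) g₂) g₃) g₄) τ.1 τ.1
      = ev X t (cobdry X t g₁)
            (frontFace (d₁+1) (frontFace (d₁+d₂+1) (frontFace (d₁+d₂+d₃+1) τ.1))) τ.1
          * ev X t g₂ (backFace (d₁+1) (frontFace (d₁+d₂+1) (frontFace (d₁+d₂+d₃+1) τ.1))) τ.1
          * ev X t g₃ (backFace (d₁+d₂+1) (frontFace (d₁+d₂+d₃+1) τ.1)) τ.1
          * ev X t g₄ (backFace (d₁+d₂+d₃+1) τ.1) τ.1 := by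
    intro τ
    obtain ⟨c1, s1, c2, s2⟩ := hcells τ
    rw [ev_cup X t _ _ _ τ.2.1 subset_rfl τ.2.2,
        ev_cup X t _ _ _ τ.2.1 s1 τ.2.2,
        ev_cup X t _ _ _ τ.2.1 s2 τ.2.2]
  rw [Finset.sum_congr rfl (fun τ _ => f1 τ)]
  exact h0

theorem keyZero2 [CharP K 2] (hne : ∀ σ ∈ X, σ.Nonempty)
    (hdown : ∀ σ ∈ X, ∀ σ' : Finset V, σ' ⊆ σ → σ'.Nonempty → σ' ∈ X)
    (C₁ C₂ C₃ C₄ : (σ' : Finset V) → Submodule K (Up X σ' t → K))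
    (horth : ∀ σ ∈ X, σ.card = t →
      ∀ c₁ ∈ C₁ σ, ∀ c₂ ∈ C₂ σ, ∀ c₃ ∈ C₃ σ, ∀ c₄ ∈ C₄ σ,
        ∑ τ : Up X σ t, c₁ τ * c₂ τ * c₃ τ * c₄ τ = 0)
    (d₁ d₂ d₃ d₄ : ℕ) (ht : d₁ + d₂ + d₃ + d₄ + 1 = t)
    (g₁ g₂ g₃ g₄ : (σ : Finset V) → Up X σ t → K)
    (hs₁ : ∀ σ ∈ X, σ.card = d₁ + 1 →
      IsSection X t (fun σ' => (C₁ σ' : Set (Up X σ' t → K))) σ (g₁ σ))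
    (hs₂ : ∀ σ ∈ X, σ.card = d₂ + 1 →
      IsSection X t (fun σ' => (C₂ σ' : Set (Up X σ' t → K))) σ (g₂ σ))
    (hs₃ : ∀ σ ∈ X, σ.card = d₃ + 1 →
      IsSection X t (fun σ' => (C₃ σ' : Set (Up X σ' t → K))) σ (g₃ σ))
    (hs₄ : ∀ σ ∈ X, σ.card = d₄ + 1 →
      IsSection X t (fun σ' => (C₄ σ' : Set (Up X σ' t → K))) σ (g₄ σ))
    (hz₁ : ∀ ρ ∈ X, ρ.card = d₁ + 2 → ∀ τ : Up X ρ t, cobdry X t g₁ ρ τ = 0)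
    (hz₃ : ∀ ρ ∈ X, ρ.card = d₃ + 2 → ∀ τ : Up X ρ t, cobdry X t g₃ ρ τ = 0)
    (hz₄ : ∀ ρ ∈ X, ρ.card = d₄ + 2 → ∀ τ : Up X ρ t, cobdry X t g₄ ρ τ = 0) :
    ∑ τ : {τ : Finset V // τ ∈ X ∧ τ.card = t + 1},
      ev X t (cup X t (d₁+d₂+d₃+1)
        (cup X t (d₁+d₂+1) (cup X t d₁ g₁ (cobdry X t g₂)) g₃) g₄) τ.1 τ.1 = 0 := by
  have hcells : ∀ τ : {τ : Finset V // τ ∈ X ∧ τ.card = t + 1},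
      (frontFace (d₁+d₂+d₃+1) τ.1).card = d₁+d₂+d₃+2 ∧
      frontFace (d₁+d₂+d₃+1) τ.1 ⊆ τ.1 ∧
      (frontFace (d₁+d₂+1) (frontFace (d₁+d₂+d₃+1) τ.1)).card = d₁+d₂+2 ∧
      frontFace (d₁+d₂+1) (frontFace (d₁+d₂+d₃+1) τ.1) ⊆ τ.1 := by
    intro τ
    have c1 : (frontFace (d₁+d₂+d₃+1) τ.1).card = d₁+d₂+d₃+2 :=
      card_frontFace (by have := τ.2.2; omega)
    have s1 : frontFace (d₁+d₂+d₃+1) τ.1 ⊆ τ.1 := frontFace_subset _ _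
    have c2 : (frontFace (d₁+d₂+1) (frontFace (d₁+d₂+d₃+1) τ.1)).card = d₁+d₂+2 :=
      card_frontFace (by omega)
    exact ⟨c1, s1, c2, (frontFace_subset _ _).trans s1⟩
  have v1 : ∀ τ : {τ : Finset V // τ ∈ X ∧ τ.card = t + 1},
      ev X t (cobdry X t g₁)
        (frontFace (d₁+1) (frontFace (d₁+d₂+1) (frontFace (d₁+d₂+d₃+1) τ.1))) τ.1 = 0 := by
    intro τ
    obtain ⟨c1, s1, c2, s2⟩ := hcells τ
    have ccard : (frontFace (d₁+1) (frontFace (d₁+d₂+1) (frontFace (d₁+d₂+d₃+1) τ.1))).card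
        = d₁ + 2 := card_frontFace (by omega)
    have csub : frontFace (d₁+1) (frontFace (d₁+d₂+1) (frontFace (d₁+d₂+d₃+1) τ.1)) ⊆ τ.1 :=
      (frontFace_subset _ _).trans s2
    exact ev_cobdry_zero' X t g₁ _
      (hz₁ _ (hdown τ.1 τ.2.1 _ csub (Finset.card_pos.mp (by omega))) ccard) τ.1
  have v3 : ∀ τ : {τ : Finset V // τ ∈ X ∧ τ.card = t + 1},
      ev X t (cobdry X t g₃) (backFace (d₁+d₂) (frontFace (d₁+d₂+d₃+1) τ.1)) τ.1 = 0 := by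
    intro τ
    obtain ⟨c1, s1, c2, s2⟩ := hcells τ
    have ccard : (backFace (d₁+d₂) (frontFace (d₁+d₂+d₃+1) τ.1)).card = d₃ + 2 := by
      rw [card_backFace, c1]; omega
    have csub : backFace (d₁+d₂) (frontFace (d₁+d₂+d₃+1) τ.1) ⊆ τ.1 :=
      (backFace_subset _ _).trans s1
    exact ev_cobdry_zero' X t g₃ _
      (hz₃ _ (hdown τ.1 τ.2.1 _ csub (Finset.card_pos.mp (by omega))) ccard) τ.1
  have v4 : ∀ τ : {τ : Finset V // τ ∈ X ∧ τ.card = t + 1},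
      ev X t (cobdry X t g₄) (backFace (d₁+d₂+d₃) τ.1) τ.1 = 0 := by
    intro τ
    have ccard : (backFace (d₁+d₂+d₃) τ.1).card = d₄ + 2 := by
      rw [card_backFace]; have := τ.2.2; omega
    have csub : backFace (d₁+d₂+d₃) τ.1 ⊆ τ.1 := backFace_subset _ _
    exact ev_cobdry_zero' X t g₄ _
      (hz₄ _ (hdown τ.1 τ.2.1 _ csub (Finset.card_pos.mp (by omega))) ccard) τ.1
  have h0 := sum_cobdry_zero X t
    (cup X t (d₁+d₂+d₃) (cup X t (d₁+d₂) (cup X t d₁ g₁ g₂) g₃) g₄)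
    (fun σ hσ hc => sum_up_zero X t hdown C₁ C₂ C₃ C₄ horth d₁ d₂ d₃ d₄ ht
      g₁ g₂ g₃ g₄ hs₁ hs₂ hs₃ hs₄ hσ hc)
  rw [Finset.sum_congr rfl (fun τ _ => expansion_ev X t hdown d₁ d₂ d₃ d₄ ht
    g₁ g₂ g₃ g₄ τ.2.1 τ.2.2 τ.2.1 subset_rfl τ.2.2)] at h0
  simp only [v1, v3, v4, mul_zero, zero_mul, add_zero, zero_add] at h0
  have f2 : ∀ τ : {τ : Finset V // τ ∈ X ∧ τ.card = t + 1},
      ev X t (cup X t (d₁+d₂+d₃+1)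
          (cup X t (d₁+d₂+1) (cup X t d₁ g₁ (cobdry X t g₂)) g₃) g₄) τ.1 τ.1
      = ev X t g₁ (frontFace d₁ (frontFace (d₁+d₂+1) (frontFace (d₁+d₂+d₃+1) τ.1))) τ.1
          * ev X t (cobdry X t g₂)
            (backFace d₁ (frontFace (d₁+d₂+1) (frontFace (d₁+d₂+d₃+1) τ.1))) τ.1
          * ev X t g₃ (backFace (d₁+d₂+1) (frontFace (d₁+d₂+d₃+1) τ.1)) τ.1
          * ev X t g₄ (backFace (d₁+d₂+d₃+1) τ.1) τ.1 := by
    intro τ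
    obtain ⟨c1, s1, c2, s2⟩ := hcells τ
    rw [ev_cup X t _ _ _ τ.2.1 subset_rfl τ.2.2,
        ev_cup X t _ _ _ τ.2.1 s1 τ.2.2,
        ev_cup X t _ _ _ τ.2.1 s2 τ.2.2]
  rw [Finset.sum_congr rfl (fun τ _ => f2 τ)]
  exact h0

theorem keyZero3 [CharP K 2] (hne : ∀ σ ∈ X, σ.Nonempty)
    (hdown : ∀ σ ∈ X, ∀ σ' : Finset V, σ' ⊆ σ → σ'.Nonempty → σ' ∈ X)
    (C₁ C₂ C₃ C₄ : (σ' : Finset V) → Submodule K (Up X σ' t → K))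
    (horth : ∀ σ ∈ X, σ.card = t →
      ∀ c₁ ∈ C₁ σ, ∀ c₂ ∈ C₂ σ, ∀ c₃ ∈ C₃ σ, ∀ c₄ ∈ C₄ σ,
        ∑ τ : Up X σ t, c₁ τ * c₂ τ * c₃ τ * c₄ τ = 0)
    (d₁ d₂ d₃ d₄ : ℕ) (ht : d₁ + d₂ + d₃ + d₄ + 1 = t)
    (g₁ g₂ g₃ g₄ : (σ : Finset V) → Up X σ t → K)
    (hs₁ : ∀ σ ∈ X, σ.card = d₁ + 1 →
      IsSection X t (fun σ' => (C₁ σ' : Set (Up X σ' t → K))) σ (g₁ σ))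
    (hs₂ : ∀ σ ∈ X, σ.card = d₂ + 1 →
      IsSection X t (fun σ' => (C₂ σ' : Set (Up X σ' t → K))) σ (g₂ σ))
    (hs₃ : ∀ σ ∈ X, σ.card = d₃ + 1 →
      IsSection X t (fun σ' => (C₃ σ' : Set (Up X σ' t → K))) σ (g₃ σ))
    (hs₄ : ∀ σ ∈ X, σ.card = d₄ + 1 →
      IsSection X t (fun σ' => (C₄ σ' : Set (Up X σ' t → K))) σ (g₄ σ))
    (hz₁ : ∀ ρ ∈ X, ρ.card = d₁ + 2 → ∀ τ : Up X ρ t, cobdry X t g₁ ρ τ = 0)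
    (hz₂ : ∀ ρ ∈ X, ρ.card = d₂ + 2 → ∀ τ : Up X ρ t, cobdry X t g₂ ρ τ = 0)
    (hz₄ : ∀ ρ ∈ X, ρ.card = d₄ + 2 → ∀ τ : Up X ρ t, cobdry X t g₄ ρ τ = 0) :
    ∑ τ : {τ : Finset V // τ ∈ X ∧ τ.card = t + 1},
      ev X t (cup X t (d₁+d₂+d₃+1)
        (cup X t (d₁+d₂) (cup X t d₁ g₁ g₂) (cobdry X t g₃)) g₄) τ.1 τ.1 = 0 := by
  have hcells : ∀ τ : {τ : Finset V // τ ∈ X ∧ τ.card = t + 1},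
      (frontFace (d₁+d₂+d₃+1) τ.1).card = d₁+d₂+d₃+2 ∧
      frontFace (d₁+d₂+d₃+1) τ.1 ⊆ τ.1 ∧
      (frontFace (d₁+d₂+1) (frontFace (d₁+d₂+d₃+1) τ.1)).card = d₁+d₂+2 ∧
      frontFace (d₁+d₂+1) (frontFace (d₁+d₂+d₃+1) τ.1) ⊆ τ.1 := by
    intro τ
    have c1 : (frontFace (d₁+d₂+d₃+1) τ.1).card = d₁+d₂+d₃+2 :=
      card_frontFace (by have := τ.2.2; omega)
    have s1 : frontFace (d₁+d₂+d₃+1) τ.1 ⊆ τ.1 := frontFace_subset _ _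
    have c2 : (frontFace (d₁+d₂+1) (frontFace (d₁+d₂+d₃+1) τ.1)).card = d₁+d₂+2 :=
      card_frontFace (by omega)
    exact ⟨c1, s1, c2, (frontFace_subset _ _).trans s1⟩
  have v1 : ∀ τ : {τ : Finset V // τ ∈ X ∧ τ.card = t + 1},
      ev X t (cobdry X t g₁)
        (frontFace (d₁+1) (frontFace (d₁+d₂+1) (frontFace (d₁+d₂+d₃+1) τ.1))) τ.1 = 0 := by
    intro τ
    obtain ⟨c1, s1, c2, s2⟩ := hcells τ
    have ccard : (frontFace (d₁+1) (frontFace (d₁+d₂+1) (frontFace (d₁+d₂+d₃+1) τ.1))).card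
        = d₁ + 2 := card_frontFace (by omega)
    have csub : frontFace (d₁+1) (frontFace (d₁+d₂+1) (frontFace (d₁+d₂+d₃+1) τ.1)) ⊆ τ.1 :=
      (frontFace_subset _ _).trans s2
    exact ev_cobdry_zero' X t g₁ _
      (hz₁ _ (hdown τ.1 τ.2.1 _ csub (Finset.card_pos.mp (by omega))) ccard) τ.1
  have v2 : ∀ τ : {τ : Finset V // τ ∈ X ∧ τ.card = t + 1},
      ev X t (cobdry X t g₂)
        (backFace d₁ (frontFace (d₁+d₂+1) (frontFace (d₁+d₂+d₃+1) τ.1))) τ.1 = 0 := by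
    intro τ
    obtain ⟨c1, s1, c2, s2⟩ := hcells τ
    have ccard : (backFace d₁ (frontFace (d₁+d₂+1) (frontFace (d₁+d₂+d₃+1) τ.1))).card
        = d₂ + 2 := by rw [card_backFace, c2]; omega
    have csub : backFace d₁ (frontFace (d₁+d₂+1) (frontFace (d₁+d₂+d₃+1) τ.1)) ⊆ τ.1 :=
      (backFace_subset _ _).trans s2
    exact ev_cobdry_zero' X t g₂ _
      (hz₂ _ (hdown τ.1 τ.2.1 _ csub (Finset.card_pos.mp (by omega))) ccard) τ.1
  have v4 : ∀ τ : {τ : Finset V // τ ∈ X ∧ τ.card = t + 1},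
      ev X t (cobdry X t g₄) (backFace (d₁+d₂+d₃) τ.1) τ.1 = 0 := by
    intro τ
    have ccard : (backFace (d₁+d₂+d₃) τ.1).card = d₄ + 2 := by
      rw [card_backFace]; have := τ.2.2; omega
    have csub : backFace (d₁+d₂+d₃) τ.1 ⊆ τ.1 := backFace_subset _ _
    exact ev_cobdry_zero' X t g₄ _
      (hz₄ _ (hdown τ.1 τ.2.1 _ csub (Finset.card_pos.mp (by omega))) ccard) τ.1
  have h0 := sum_cobdry_zero X t
    (cup X t (d₁+d₂+d₃) (cup X t (d₁+d₂) (cup X t d₁ g₁ g₂) g₃) g₄)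
    (fun σ hσ hc => sum_up_zero X t hdown C₁ C₂ C₃ C₄ horth d₁ d₂ d₃ d₄ ht
      g₁ g₂ g₃ g₄ hs₁ hs₂ hs₃ hs₄ hσ hc)
  rw [Finset.sum_congr rfl (fun τ _ => expansion_ev X t hdown d₁ d₂ d₃ d₄ ht
    g₁ g₂ g₃ g₄ τ.2.1 τ.2.2 τ.2.1 subset_rfl τ.2.2)] at h0
  simp only [v1, v2, v4, mul_zero, zero_mul, add_zero, zero_add] at h0
  have f3 : ∀ τ : {τ : Finset V // τ ∈ X ∧ τ.card = t + 1},
      ev X t (cup X t (d₁+d₂+d₃+1)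
          (cup X t (d₁+d₂) (cup X t d₁ g₁ g₂) (cobdry X t g₃)) g₄) τ.1 τ.1
      = ev X t g₁ (frontFace d₁ (frontFace (d₁+d₂) (frontFace (d₁+d₂+d₃+1) τ.1))) τ.1
          * ev X t g₂ (backFace d₁ (frontFace (d₁+d₂) (frontFace (d₁+d₂+d₃+1) τ.1))) τ.1
          * ev X t (cobdry X t g₃) (backFace (d₁+d₂) (frontFace (d₁+d₂+d₃+1) τ.1)) τ.1
          * ev X t g₄ (backFace (d₁+d₂+d₃+1) τ.1) τ.1 := by
    intro τ
    obtain ⟨c1, s1, c2, s2⟩ := hcells τ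
    rw [ev_cup X t _ _ _ τ.2.1 subset_rfl τ.2.2,
        ev_cup X t _ _ _ τ.2.1 s1 τ.2.2,
        ev_cup X t _ _ _ τ.2.1 ((frontFace_subset _ _).trans s1) τ.2.2]
  rw [Finset.sum_congr rfl (fun τ _ => f3 τ)]
  exact h0

theorem ev_split1 (i₁ i₂ i₃ : ℕ) (x x' y z w : (σ : Finset V) → Up X σ t → K)
    {S T : Finset V} (hT : T ∈ X) (hsub : S ⊆ T) (hTc : T.card = t + 1) :
    ev X t (cup X t i₃ (cup X t i₂ (cup X t i₁ (x + x') y) z) w) S T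
    = ev X t (cup X t i₃ (cup X t i₂ (cup X t i₁ x y) z) w) S T
      + ev X t (cup X t i₃ (cup X t i₂ (cup X t i₁ x' y) z) w) S T := by
  have h1 : frontFace i₃ S ⊆ T := (frontFace_subset _ _).trans hsub
  have h2 : frontFace i₂ (frontFace i₃ S) ⊆ T := (frontFace_subset _ _).trans h1
  rw [ev_cup X t i₃ _ w hT hsub hTc, ev_cup X t i₂ _ z hT h1 hTc,
      ev_cup X t i₁ _ y hT h2 hTc,
      ev_cup X t i₃ _ w hT hsub hTc, ev_cup X t i₂ _ z hT h1 hTc,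
      ev_cup X t i₁ x y hT h2 hTc,
      ev_cup X t i₃ _ w hT hsub hTc, ev_cup X t i₂ _ z hT h1 hTc,
      ev_cup X t i₁ x' y hT h2 hTc, ev_add]
  ring

theorem ev_split2 (i₁ i₂ i₃ : ℕ) (x y y' z w : (σ : Finset V) → Up X σ t → K)
    {S T : Finset V} (hT : T ∈ X) (hsub : S ⊆ T) (hTc : T.card = t + 1) :
    ev X t (cup X t i₃ (cup X t i₂ (cup X t i₁ x (y + y')) z) w) S T
    = ev X t (cup X t i₃ (cup X t i₂ (cup X t i₁ x y) z) w) S T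
      + ev X t (cup X t i₃ (cup X t i₂ (cup X t i₁ x y') z) w) S T := by
  have h1 : frontFace i₃ S ⊆ T := (frontFace_subset _ _).trans hsub
  have h2 : frontFace i₂ (frontFace i₃ S) ⊆ T := (frontFace_subset _ _).trans h1
  rw [ev_cup X t i₃ _ w hT hsub hTc, ev_cup X t i₂ _ z hT h1 hTc,
      ev_cup X t i₁ x _ hT h2 hTc,
      ev_cup X t i₃ _ w hT hsub hTc, ev_cup X t i₂ _ z hT h1 hTc,
      ev_cup X t i₁ x y hT h2 hTc,
      ev_cup X t i₃ _ w hT hsub hTc, ev_cup X t i₂ _ z hT h1 hTc,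
      ev_cup X t i₁ x y' hT h2 hTc, ev_add]
  ring

theorem ev_split3 (i₂ i₃ : ℕ) (q z z' w : (σ : Finset V) → Up X σ t → K)
    {S T : Finset V} (hT : T ∈ X) (hsub : S ⊆ T) (hTc : T.card = t + 1) :
    ev X t (cup X t i₃ (cup X t i₂ q (z + z')) w) S T
    = ev X t (cup X t i₃ (cup X t i₂ q z) w) S T
      + ev X t (cup X t i₃ (cup X t i₂ q z') w) S T := by
  have h1 : frontFace i₃ S ⊆ T := (frontFace_subset _ _).trans hsub
  rw [ev_cup X t i₃ _ w hT hsub hTc, ev_cup X t i₂ q _ hT h1 hTc,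
      ev_cup X t i₃ _ w hT hsub hTc, ev_cup X t i₂ q z hT h1 hTc,
      ev_cup X t i₃ _ w hT hsub hTc, ev_cup X t i₂ q z' hT h1 hTc, ev_add]
  ring

end Ev







end SheafCup

open SheafCup in
/-- Four local code families whose entrywise quadruple products sum to
zero over every `(t−1)`-cell, with `ℓ₁+ℓ₂+ℓ₃+ℓ₄ = t`: for a fixed cocycle `ζ₄`, the
trilinear form `f_{ζ₄}(α₁,α₂,α₃) = Σ_{τ ∈ X(t)} (((α₁∪α₂)∪α₃)∪ζ₄)(τ)(τ)` is invariant
under changing cocycles by coboundaries. -/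
theorem targeted_trilinear_form_on_cohomology
    {V : Type*} [Fintype V] [LinearOrder V]
    {K : Type*} [Field K] [Fintype K] [CharP K 2]
    (X : Set (Finset V)) [DecidablePred (· ∈ X)] (t : ℕ)
    (hne : ∀ σ ∈ X, σ.Nonempty)
    (hdown : ∀ σ ∈ X, ∀ σ' : Finset V, σ' ⊆ σ → σ'.Nonempty → σ' ∈ X)
    (hpure : ∀ σ ∈ X, ∃ τ ∈ X, σ ⊆ τ ∧ τ.card = t + 1)
    (C₁ C₂ C₃ C₄ : (σ' : Finset V) → Submodule K (Up X σ' t → K))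
    (ℓ₁ ℓ₂ ℓ₃ ℓ₄ : ℕ) (hℓ : ℓ₁ + ℓ₂ + ℓ₃ + ℓ₄ = t)
    -- quadruple products of the local codes sum to zero
    (horth : ∀ σ ∈ X, σ.card = t →
      ∀ c₁ ∈ C₁ σ, ∀ c₂ ∈ C₂ σ, ∀ c₃ ∈ C₃ σ, ∀ c₄ ∈ C₄ σ,
        ∑ τ : Up X σ t, c₁ τ * c₂ τ * c₃ τ * c₄ τ = 0)
    -- a fixed cocycle ζ₄ ∈ ker δ^{ℓ₄}
    (ζ₄ : (σ : Finset V) → Up X σ t → K)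
    (hζ₄ : IsCochain X t (fun σ' => (C₄ σ' : Set (Up X σ' t → K))) ℓ₄ ζ₄)
    (hζ₄c : ∀ ρ ∈ X, ρ.card = ℓ₄ + 2 → ∀ τ : Up X ρ t, cobdry X t ζ₄ ρ τ = 0)
    -- cocycles ζᵢ ∈ ker δ^{ℓᵢ}, i = 1,2,3
    (ζ₁ ζ₂ ζ₃ : (σ : Finset V) → Up X σ t → K)
    (hζ₁ : IsCochain X t (fun σ' => (C₁ σ' : Set (Up X σ' t → K))) ℓ₁ ζ₁)
    (hζ₂ : IsCochain X t (fun σ' => (C₂ σ' : Set (Up X σ' t → K))) ℓ₂ ζ₂)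
    (hζ₃ : IsCochain X t (fun σ' => (C₃ σ' : Set (Up X σ' t → K))) ℓ₃ ζ₃)
    (hζ₁c : ∀ ρ ∈ X, ρ.card = ℓ₁ + 2 → ∀ τ : Up X ρ t, cobdry X t ζ₁ ρ τ = 0)
    (hζ₂c : ∀ ρ ∈ X, ρ.card = ℓ₂ + 2 → ∀ τ : Up X ρ t, cobdry X t ζ₂ ρ τ = 0)
    (hζ₃c : ∀ ρ ∈ X, ρ.card = ℓ₃ + 2 → ∀ τ : Up X ρ t, cobdry X t ζ₃ ρ τ = 0)
    -- coboundaries bᵢ = δγᵢ ∈ im δ^{ℓᵢ−1}, i = 1,2,3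
    (γ₁ γ₂ γ₃ : (σ : Finset V) → Up X σ t → K)
    (hγ₁ : ∀ σ ∈ X, σ.card = ℓ₁ →
      IsSection X t (fun σ' => (C₁ σ' : Set (Up X σ' t → K))) σ (γ₁ σ))
    (hγ₂ : ∀ σ ∈ X, σ.card = ℓ₂ →
      IsSection X t (fun σ' => (C₂ σ' : Set (Up X σ' t → K))) σ (γ₂ σ))
    (hγ₃ : ∀ σ ∈ X, σ.card = ℓ₃ →
      IsSection X t (fun σ' => (C₃ σ' : Set (Up X σ' t → K))) σ (γ₃ σ)) :
    ∑ τ : {τ : Finset V // τ ∈ X ∧ τ.card = t + 1},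
      cup X t (ℓ₁ + ℓ₂ + ℓ₃)
        (cup X t (ℓ₁ + ℓ₂)
          (cup X t ℓ₁ (ζ₁ + cobdry X t γ₁) (ζ₂ + cobdry X t γ₂))
          (ζ₃ + cobdry X t γ₃))
        ζ₄ τ.1 ⟨τ.1, τ.2.1, subset_rfl, τ.2.2⟩ =
    ∑ τ : {τ : Finset V // τ ∈ X ∧ τ.card = t + 1},
      cup X t (ℓ₁ + ℓ₂ + ℓ₃) (cup X t (ℓ₁ + ℓ₂) (cup X t ℓ₁ ζ₁ ζ₂) ζ₃)
        ζ₄ τ.1 ⟨τ.1, τ.2.1, subset_rfl, τ.2.2⟩ := by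
  -- sections for the modified cocycles
  have hsb₂ : ∀ σ ∈ X, σ.card = ℓ₂ + 1 →
      IsSection X t (fun σ' => (C₂ σ' : Set (Up X σ' t → K))) σ ((ζ₂ + cobdry X t γ₂) σ) := by
    intro σ hσ hc
    exact isSection_add X t C₂ (hζ₂ σ hσ hc) (isSection_cobdry X t C₂ γ₂ ℓ₂ hγ₂ hσ hc)
  have hsb₃ : ∀ σ ∈ X, σ.card = ℓ₃ + 1 →
      IsSection X t (fun σ' => (C₃ σ' : Set (Up X σ' t → K))) σ ((ζ₃ + cobdry X t γ₃) σ) := by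
    intro σ hσ hc
    exact isSection_add X t C₃ (hζ₃ σ hσ hc) (isSection_cobdry X t C₃ γ₃ ℓ₃ hγ₃ hσ hc)
  have hzb₂ := cocycle_add X t hne hdown ζ₂ γ₂ ℓ₂ hζ₂c
  have hzb₃ := cocycle_add X t hne hdown ζ₃ γ₃ ℓ₃ hζ₃c
  -- pass to ev form
  rw [Finset.sum_congr rfl (fun (τ : {τ : Finset V // τ ∈ X ∧ τ.card = t + 1}) _ =>
        ev_eq X t (cup X t (ℓ₁ + ℓ₂ + ℓ₃) (cup X t (ℓ₁ + ℓ₂)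
          (cup X t ℓ₁ (ζ₁ + cobdry X t γ₁) (ζ₂ + cobdry X t γ₂)) (ζ₃ + cobdry X t γ₃)) ζ₄)
          τ.1 τ.1 τ.2.1 subset_rfl τ.2.2),
      Finset.sum_congr rfl (fun (τ : {τ : Finset V // τ ∈ X ∧ τ.card = t + 1}) _ =>
        ev_eq X t (cup X t (ℓ₁ + ℓ₂ + ℓ₃) (cup X t (ℓ₁ + ℓ₂) (cup X t ℓ₁ ζ₁ ζ₂) ζ₃) ζ₄)
          τ.1 τ.1 τ.2.1 subset_rfl τ.2.2)]
  -- step 1 : strip the coboundary in slot 1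
  rw [Finset.sum_congr rfl (fun (τ : {τ : Finset V // τ ∈ X ∧ τ.card = t + 1}) _ =>
        ev_split1 X t ℓ₁ (ℓ₁ + ℓ₂) (ℓ₁ + ℓ₂ + ℓ₃) ζ₁ (cobdry X t γ₁)
          (ζ₂ + cobdry X t γ₂) (ζ₃ + cobdry X t γ₃) ζ₄ τ.2.1 subset_rfl τ.2.2),
      Finset.sum_add_distrib]
  have k1 : ∑ τ : {τ : Finset V // τ ∈ X ∧ τ.card = t + 1},
      ev X t (cup X t (ℓ₁ + ℓ₂ + ℓ₃) (cup X t (ℓ₁ + ℓ₂)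
        (cup X t ℓ₁ (cobdry X t γ₁) (ζ₂ + cobdry X t γ₂)) (ζ₃ + cobdry X t γ₃)) ζ₄)
        τ.1 τ.1 = 0 := by
    rcases Nat.eq_zero_or_pos ℓ₁ with h0 | hpos
    · subst h0
      refine Finset.sum_eq_zero fun τ _ => ?_
      have h1 : frontFace (0 + ℓ₂ + ℓ₃) τ.1 ⊆ τ.1 := frontFace_subset _ _
      have h2 : frontFace (0 + ℓ₂) (frontFace (0 + ℓ₂ + ℓ₃) τ.1) ⊆ τ.1 :=
        (frontFace_subset _ _).trans h1
      rw [ev_cup X t _ _ _ τ.2.1 subset_rfl τ.2.2, ev_cup X t _ _ _ τ.2.1 h1 τ.2.2,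
          ev_cup X t _ _ _ τ.2.1 h2 τ.2.2,
          ev_cobdry_zero_of_card_le_one X t hne γ₁
            (le_trans (card_frontFace_le 0 _) (by omega)) τ.1]
      ring
    · obtain ⟨m, hm⟩ : ∃ m, ℓ₁ = m + 1 := ⟨ℓ₁ - 1, by omega⟩
      rw [show ℓ₁ + ℓ₂ + ℓ₃ = m + ℓ₂ + ℓ₃ + 1 from by omega,
          show ℓ₁ + ℓ₂ = m + ℓ₂ + 1 from by omega, hm]
      exact keyZero1 X t hne hdown C₁ C₂ C₃ C₄ horth m ℓ₂ ℓ₃ ℓ₄ (by omega) γ₁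
        (ζ₂ + cobdry X t γ₂) (ζ₃ + cobdry X t γ₃) ζ₄
        (fun σ hσ hc => hγ₁ σ hσ (by omega)) hsb₂ hsb₃ hζ₄ hzb₂ hzb₃ hζ₄c
  rw [k1, add_zero]
  -- step 2 : strip the coboundary in slot 2
  rw [Finset.sum_congr rfl (fun (τ : {τ : Finset V // τ ∈ X ∧ τ.card = t + 1}) _ =>
        ev_split2 X t ℓ₁ (ℓ₁ + ℓ₂) (ℓ₁ + ℓ₂ + ℓ₃) ζ₁ ζ₂ (cobdry X t γ₂)
          (ζ₃ + cobdry X t γ₃) ζ₄ τ.2.1 subset_rfl τ.2.2),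
      Finset.sum_add_distrib]
  have k2 : ∑ τ : {τ : Finset V // τ ∈ X ∧ τ.card = t + 1},
      ev X t (cup X t (ℓ₁ + ℓ₂ + ℓ₃) (cup X t (ℓ₁ + ℓ₂)
        (cup X t ℓ₁ ζ₁ (cobdry X t γ₂)) (ζ₃ + cobdry X t γ₃)) ζ₄) τ.1 τ.1 = 0 := by
    rcases Nat.eq_zero_or_pos ℓ₂ with h0 | hpos
    · subst h0
      refine Finset.sum_eq_zero fun τ _ => ?_
      have hA : (frontFace (ℓ₁ + 0 + ℓ₃) τ.1).card = ℓ₁ + 0 + ℓ₃ + 1 :=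
        card_frontFace (by have := τ.2.2; omega)
      have h1 : frontFace (ℓ₁ + 0 + ℓ₃) τ.1 ⊆ τ.1 := frontFace_subset _ _
      have hB : (frontFace (ℓ₁ + 0) (frontFace (ℓ₁ + 0 + ℓ₃) τ.1)).card = ℓ₁ + 0 + 1 :=
        card_frontFace (by omega)
      have h2 : frontFace (ℓ₁ + 0) (frontFace (ℓ₁ + 0 + ℓ₃) τ.1) ⊆ τ.1 :=
        (frontFace_subset _ _).trans h1
      rw [ev_cup X t _ _ _ τ.2.1 subset_rfl τ.2.2, ev_cup X t _ _ _ τ.2.1 h1 τ.2.2,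
          ev_cup X t _ _ _ τ.2.1 h2 τ.2.2,
          ev_cobdry_zero_of_card_le_one X t hne γ₂
            (by rw [card_backFace, hB]; omega) τ.1]
      ring
    · obtain ⟨m, hm⟩ : ∃ m, ℓ₂ = m + 1 := ⟨ℓ₂ - 1, by omega⟩
      rw [show ℓ₁ + ℓ₂ + ℓ₃ = ℓ₁ + m + ℓ₃ + 1 from by omega,
          show ℓ₁ + ℓ₂ = ℓ₁ + m + 1 from by omega]
      exact keyZero2 X t hne hdown C₁ C₂ C₃ C₄ horth ℓ₁ m ℓ₃ ℓ₄ (by omega) ζ₁ γ₂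
        (ζ₃ + cobdry X t γ₃) ζ₄ hζ₁
        (fun σ hσ hc => hγ₂ σ hσ (by omega)) hsb₃ hζ₄ hζ₁c hzb₃ hζ₄c
  rw [k2, add_zero]
  -- step 3 : strip the coboundary in slot 3
  rw [Finset.sum_congr rfl (fun (τ : {τ : Finset V // τ ∈ X ∧ τ.card = t + 1}) _ =>
        ev_split3 X t (ℓ₁ + ℓ₂) (ℓ₁ + ℓ₂ + ℓ₃) (cup X t ℓ₁ ζ₁ ζ₂) ζ₃ (cobdry X t γ₃)
          ζ₄ τ.2.1 subset_rfl τ.2.2),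
      Finset.sum_add_distrib]
  have k3 : ∑ τ : {τ : Finset V // τ ∈ X ∧ τ.card = t + 1},
      ev X t (cup X t (ℓ₁ + ℓ₂ + ℓ₃) (cup X t (ℓ₁ + ℓ₂)
        (cup X t ℓ₁ ζ₁ ζ₂) (cobdry X t γ₃)) ζ₄) τ.1 τ.1 = 0 := by
    rcases Nat.eq_zero_or_pos ℓ₃ with h0 | hpos
    · subst h0
      refine Finset.sum_eq_zero fun τ _ => ?_
      have hA : (frontFace (ℓ₁ + ℓ₂ + 0) τ.1).card = ℓ₁ + ℓ₂ + 0 + 1 :=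
        card_frontFace (by have := τ.2.2; omega)
      have h1 : frontFace (ℓ₁ + ℓ₂ + 0) τ.1 ⊆ τ.1 := frontFace_subset _ _
      rw [ev_cup X t _ _ _ τ.2.1 subset_rfl τ.2.2, ev_cup X t _ _ _ τ.2.1 h1 τ.2.2,
          ev_cobdry_zero_of_card_le_one X t hne γ₃
            (by rw [card_backFace, hA]; omega) τ.1]
      ring
    · obtain ⟨m, hm⟩ : ∃ m, ℓ₃ = m + 1 := ⟨ℓ₃ - 1, by omega⟩
      rw [show ℓ₁ + ℓ₂ + ℓ₃ = ℓ₁ + ℓ₂ + m + 1 from by omega]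
      exact keyZero3 X t hne hdown C₁ C₂ C₃ C₄ horth ℓ₁ ℓ₂ m ℓ₄ (by omega) ζ₁ ζ₂ γ₃ ζ₄
        hζ₁ hζ₂ (fun σ hσ hc => hγ₃ σ hσ (by omega)) hζ₄ hζ₁c hζ₂c hζ₄c
  rw [k3, add_zero]
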